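/- There is an absolute constant C > 0 such that for all integers k ≥ 1 and f ≥ 1: if H is a finite simple graph on n vertices with colored vertices and edges that admits a 2k-blocking set B in which every edge of H appears in at most f pairs of B, then the number of edges {u,v} of H with c(u) = c(v) is at most C·f·n^{1+1/k}. -/

import Mathlib

open SimpleGraph

lemma exists_cycle_of_two_paths {V : Type} [DecidableEq V] {G : SimpleGraph V} :
    ∀ (n : ℕ) {u w : V} (p q : G.Walk u w), p.length + q.length ≤ n →
      p.IsPath → q.IsPath → p ≠ q →
      ∃ (a : V) (c : G.Walk a a), c.IsCycle ∧ c.length ≤ p.length + q.length := by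
  intro n
  induction n with
  | zero =>
    intro u w p q hlen hp hq hne
    have hp0 : p.length = 0 := by omega
    have hq0 : q.length = 0 := by omega
    cases p with
    | nil =>
      cases q with
      | nil => exact absurd rfl hne
      | cons h q' => simp [Walk.length_cons] at hq0
    | cons h p' => simp [Walk.length_cons] at hp0
  | succ n ih =>
    intro u w p q hlen hp hq hne
    cases p with
    | nil =>
      -- q : Walk u u path, so q = nil
      have : q = Walk.nil := Walk.isPath_iff_eq_nil.mp hq
      exact absurd this.symm hne
    | @cons _ x _ h p' =>
      cases q with
      | nil =>
        have : Walk.cons h p' = Walk.nil := Walk.isPath_iff_eq_nil.mp hp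
        exact absurd this hne
      | @cons _ y _ h2 q' =>
        by_cases hxy : x = y
        · subst hxy
          have hne' : p' ≠ q' := by
            intro hh; subst hh; exact hne rfl
          have hp' : p'.IsPath := hp.of_cons
          have hq' : q'.IsPath := hq.of_cons
          obtain ⟨a, c, hc, hcl⟩ := ih p' q' (by
            simp [Walk.length_cons] at hlen; omega) hp' hq' hne'
          exact ⟨a, c, hc, by simp [Walk.length_cons]; omega⟩
        · -- first edges differ; build cycle through u
          -- d := p' .append q.reverse : x → u, avoiding edge s(u,x)
          have hq'path : q'.IsPath := hq.of_cons
          have hp'path : p'.IsPath := hp.of_cons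
          have hunotp' : u ∉ p'.support := by
            have := hp.support_nodup
            simp [Walk.support_cons] at this
            exact this.1
          have hunotq' : u ∉ q'.support := by
            have := hq.support_nodup
            simp [Walk.support_cons] at this
            exact this.1
          set d : G.Walk x u := p'.append (Walk.cons h2 q').reverse with hd
          have hednotin : s(u, x) ∉ d.bypass.edges := by
            intro hmem
            have hmem' := d.edges_bypass_subset hmem
            rw [hd, Walk.edges_append, List.mem_append] at hmem'
            rcases hmem' with hm | hm
            · exact hunotp' (p'.fst_mem_support_of_mem_edges hm)
            · rw [Walk.edges_reverse, List.mem_reverse] at hm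
              rw [Walk.edges_cons, List.mem_cons] at hm
              rcases hm with hm | hm
              · rw [Sym2.eq_iff] at hm
                rcases hm with ⟨_, hm2⟩ | ⟨hm1, hm2⟩
                · exact hxy hm2
                · exact (G.ne_of_adj h) hm2.symm
              · exact hunotq' (q'.fst_mem_support_of_mem_edges hm)
          have hcyc : (Walk.cons h d.bypass).IsCycle :=
            SimpleGraph.Path.cons_isCycle ⟨d.bypass, d.bypass_isPath⟩ h hednotin
          refine ⟨u, Walk.cons h d.bypass, hcyc, ?_⟩
          have := d.length_bypass_le
          have hdl : d.length = p'.length + (q'.length + 1) := by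
            rw [hd]; simp [Walk.length_append, Walk.length_reverse]
          simp only [Walk.length_cons]
          simp [Walk.length_cons]
          omega

lemma isPath_concat' {V : Type} {G : SimpleGraph V} {u v w : V} {p : G.Walk u v}
    (hp : p.IsPath) (h : G.Adj v w) (hw : w ∉ p.support) : (p.concat h).IsPath := by
  rw [← Walk.isPath_reverse_iff, Walk.reverse_concat]
  exact hp.reverse.cons (by simpa [Walk.support_reverse] using hw)

lemma exists_shortest_path {V : Type} [DecidableEq V] {G : SimpleGraph V} {u v : V}
    (h : G.Reachable u v) :
    ∃ p : G.Walk u v, p.IsPath ∧ p.length = G.dist u v := by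
  obtain ⟨q, hq⟩ := h.exists_walk_length_eq_dist
  refine ⟨q.bypass, q.bypass_isPath, le_antisymm ?_ (SimpleGraph.dist_le _)⟩
  calc q.bypass.length ≤ q.length := q.length_bypass_le
    _ = G.dist u v := hq

lemma eq_end_of_mem_support_dist {V : Type} [DecidableEq V] {G : SimpleGraph V}
    {v x w : V} {p : G.Walk v x} (hw : w ∈ p.support) (hd : p.length ≤ G.dist v w) : w = x := by
  have h1 : G.dist v w ≤ (p.takeUntil w hw).length := SimpleGraph.dist_le _
  have h2 : (p.takeUntil w hw).length ≤ p.length := p.length_takeUntil_le hw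
  have h3 : (p.takeUntil w hw).length + (p.dropUntil w hw).length = p.length := by
    rw [← Walk.length_append, Walk.take_spec]
  have h0 : (p.dropUntil w hw).length = 0 := by omega
  exact Walk.eq_of_length_eq_zero h0

lemma no_two_close_neighbors {V : Type} [DecidableEq V] {G : SimpleGraph V} {k : ℕ}
    (hcyc : ∀ (a : V) (c : G.Walk a a), c.IsCycle → c.length ≤ 2 * k → False)
    {v w x y : V} {j : ℕ} (hjk : j + 1 ≤ k)
    (hxy : x ≠ y) (hxw : G.Adj x w) (hyw : G.Adj y w)
    (hrx : G.Reachable v x) (hry : G.Reachable v y)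
    (hdx : G.dist v x ≤ j) (hdy : G.dist v y ≤ j) (hdw : j ≤ G.dist v w) : False := by
  obtain ⟨px, hpx, hlx⟩ := exists_shortest_path hrx
  obtain ⟨py, hpy, hly⟩ := exists_shortest_path hry
  have hwx : w ∉ px.support := by
    intro hmem
    have heq : w = x := eq_end_of_mem_support_dist hmem (by rw [hlx]; omega)
    exact (G.ne_of_adj hxw) heq.symm
  have hwy : w ∉ py.support := by
    intro hmem
    have heq : w = y := eq_end_of_mem_support_dist hmem (by rw [hly]; omega)
    exact (G.ne_of_adj hyw) heq.symm
  have hqx : (px.concat hxw).IsPath := isPath_concat' hpx hxw hwx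
  have hqy : (py.concat hyw).IsPath := isPath_concat' hpy hyw hwy
  have hne : px.concat hxw ≠ py.concat hyw := by
    intro heq
    have hmem : s(x, w) ∈ (py.concat hyw).edges := by
      rw [← heq, Walk.edges_concat]
      simp
    rw [Walk.edges_concat, List.concat_eq_append, List.mem_append] at hmem
    rcases hmem with hm | hm
    · exact hwy (py.snd_mem_support_of_mem_edges hm)
    · simp only [List.mem_singleton, Sym2.eq_iff] at hm
      rcases hm with ⟨h1, _⟩ | ⟨h1, h2⟩
      · exact hxy h1
      · exact (G.ne_of_adj hxw) h1
  obtain ⟨a, c, hc, hcl⟩ := exists_cycle_of_two_paths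
    ((px.concat hxw).length + (py.concat hyw).length) (px.concat hxw) (py.concat hyw)
    le_rfl hqx hqy hne
  apply hcyc a c hc
  rw [Walk.length_concat, Walk.length_concat] at hcl
  omega

lemma moore_vertex_bound {W : Type} [Fintype W] [DecidableEq W] (G : SimpleGraph W)
    [DecidableRel G.Adj]
    (k δ : ℕ) (hk : 1 ≤ k)
    (hcyc : ∀ (a : W) (c : G.Walk a a), c.IsCycle → c.length ≤ 2 * k → False)
    (hne : Nonempty W)
    (hdeg : ∀ a : W, δ + 1 ≤ (Finset.univ.filter (G.Adj a)).card) :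
    δ ^ k ≤ Fintype.card W := by
  classical
  obtain ⟨v⟩ := hne
  set L : ℕ → Finset W :=
    fun i => Finset.univ.filter (fun w => G.Reachable v w ∧ G.dist v w = i) with hLdef
  have hLmem : ∀ i w, w ∈ L i ↔ G.Reachable v w ∧ G.dist v w = i := by
    intro i w; simp [hLdef]
  have growth : ∀ i, i + 1 ≤ k → (L i).card * δ ≤ (L (i + 1)).card := by
    intro i hik
    set P : Finset (W × W) := ((L i) ×ˢ (L (i + 1))).filter (fun p : W × W => G.Adj p.1 p.2)
      with hPdef
    have hPfst : ∀ p ∈ P, p.1 ∈ L i := by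
      intro p hp
      rw [hPdef, Finset.mem_filter, Finset.mem_product] at hp
      exact hp.1.1
    have hPsnd : ∀ p ∈ P, p.2 ∈ L (i + 1) := by
      intro p hp
      rw [hPdef, Finset.mem_filter, Finset.mem_product] at hp
      exact hp.1.2
    have hP1 : (L i).card * δ ≤ P.card := by
      rw [Finset.card_eq_sum_card_fiberwise hPfst]
      calc (L i).card * δ = ∑ _w ∈ L i, δ := by rw [Finset.sum_const, smul_eq_mul]
        _ ≤ _ := ?_
      refine Finset.sum_le_sum ?_
      intro w hw
      rw [hLmem] at hw
      obtain ⟨hwr, hwd⟩ := hw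
      set N := Finset.univ.filter (G.Adj w) with hNdef
      set Ngood := N.filter (fun x => x ∈ L (i + 1)) with hNg
      set Nbad := N.filter (fun x => G.dist v x ≤ i) with hNb
      have hreach : ∀ x ∈ N, G.Reachable v x := by
        intro x hx
        rw [hNdef, Finset.mem_filter] at hx
        exact hwr.trans hx.2.reachable
      have hdistle : ∀ x ∈ N, G.dist v x ≤ i + 1 := by
        intro x hx
        rw [hNdef, Finset.mem_filter] at hx
        obtain ⟨p0, hp0⟩ := hwr.exists_walk_length_eq_dist
        have := SimpleGraph.dist_le (p0.concat hx.2)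
        rw [Walk.length_concat, hp0, hwd] at this
        exact this
      have hsub : N ⊆ Ngood ∪ Nbad := by
        intro x hx
        simp only [hNg, hNb, Finset.mem_union, Finset.mem_filter]
        by_cases hc : G.dist v x ≤ i
        · exact Or.inr ⟨hx, hc⟩
        · refine Or.inl ⟨hx, ?_⟩
          rw [hLmem]
          have := hdistle x hx
          exact ⟨hreach x hx, by omega⟩
      have hbad : Nbad.card ≤ 1 := by
        rw [Finset.card_le_one]
        intro x hx y hy
        by_contra hxy
        rw [hNb, Finset.mem_filter, hNdef, Finset.mem_filter] at hx hy
        exact no_two_close_neighbors hcyc hik hxy hx.1.2.symm hy.1.2.symm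
          (hreach x (by rw [hNdef, Finset.mem_filter]; exact hx.1))
          (hreach y (by rw [hNdef, Finset.mem_filter]; exact hy.1))
          hx.2 hy.2 (le_of_eq hwd.symm)
      have hNcard : δ + 1 ≤ N.card := hdeg w
      have hNunion : N.card ≤ Ngood.card + Nbad.card :=
        le_trans (Finset.card_le_card hsub) (Finset.card_union_le _ _)
      have hgood : δ ≤ Ngood.card := by omega
      refine le_trans hgood (Finset.card_le_card_of_injOn (fun x => (w, x)) ?_ ?_)
      · intro x hx
        rw [Finset.mem_coe] at hx
        simp only [hNg, hNdef, Finset.mem_filter] at hx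
        simp only [Finset.mem_coe]
        rw [Finset.mem_filter, hPdef, Finset.mem_filter, Finset.mem_product]
        exact ⟨⟨⟨by rw [hLmem]; exact ⟨hwr, hwd⟩, hx.2⟩, hx.1.2⟩, rfl⟩
      · intro x _ y _ hxy
        exact (Prod.mk.injEq _ _ _ _).mp hxy |>.2
    have hP2 : P.card ≤ (L (i + 1)).card := by
      rw [Finset.card_eq_sum_card_fiberwise hPsnd]
      have : ∀ x ∈ L (i + 1), (P.filter (fun p => p.2 = x)).card ≤ 1 := by
        intro x hx
        rw [Finset.card_le_one]
        intro p hp q hq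
        rw [Finset.mem_filter] at hp hq
        have hpP := hp.1
        have hqP := hq.1
        have hp2 := hp.2
        have hq2 := hq.2
        have hpfst := hPfst p hpP
        have hqfst := hPfst q hqP
        rw [hLmem] at hpfst hqfst hx
        rw [hPdef, Finset.mem_filter] at hpP hqP
        have hadj1 : G.Adj p.1 x := hp2 ▸ hpP.2
        have hadj2 : G.Adj q.1 x := hq2 ▸ hqP.2
        by_contra hne'
        have hfstne : p.1 ≠ q.1 := by
          intro hh
          exact hne' (Prod.ext hh (hp2.trans hq2.symm))
        exact no_two_close_neighbors hcyc hik hfstne hadj1 hadj2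
          hpfst.1 hqfst.1 (le_of_eq hpfst.2) (le_of_eq hqfst.2)
          (by rw [hx.2]; omega)
      calc ∑ x ∈ L (i + 1), (P.filter (fun p => p.2 = x)).card
          ≤ ∑ _x ∈ L (i + 1), 1 := Finset.sum_le_sum this
        _ = (L (i + 1)).card := by simp
    exact le_trans hP1 hP2
  have pow : ∀ i, i ≤ k → δ ^ i ≤ (L i).card := by
    intro i
    induction i with
    | zero =>
      intro _
      have hv : v ∈ L 0 := by
        rw [hLmem]
        exact ⟨Reachable.refl v, SimpleGraph.dist_self⟩
      simpa using Finset.card_pos.mpr ⟨v, hv⟩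
    | succ i ih =>
      intro hik
      calc δ ^ (i + 1) = δ ^ i * δ := pow_succ δ i
        _ ≤ (L i).card * δ := Nat.mul_le_mul_right δ (ih (by omega))
        _ ≤ (L (i + 1)).card := growth i hik
  calc δ ^ k ≤ (L k).card := pow k le_rfl
    _ ≤ Fintype.card W := by
      simpa using Finset.card_le_univ (L k)

lemma exists_min_degree_subgraph {V : Type} [Fintype V] [DecidableEq V]
    (G : SimpleGraph V) [DecidableRel G.Adj] (d : ℕ) :
    ∀ (S : Finset V),
      d * S.card < (G.edgeFinset.filter (fun e => ∀ x ∈ e, x ∈ S)).card →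
      ∃ T ⊆ S, T.Nonempty ∧ ∀ v ∈ T, d + 1 ≤ (T.filter (G.Adj v)).card := by
  suffices h : ∀ (n : ℕ) (S : Finset V), S.card ≤ n →
      d * S.card < (G.edgeFinset.filter (fun e => ∀ x ∈ e, x ∈ S)).card →
      ∃ T ⊆ S, T.Nonempty ∧ ∀ v ∈ T, d + 1 ≤ (T.filter (G.Adj v)).card by
    intro S h'
    exact h S.card S le_rfl h'
  intro n
  induction n with
  | zero =>
    intro S hS hlt
    exfalso
    have hS0 : S = ∅ := Finset.card_eq_zero.mp (by omega)
    subst hS0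
    have : (G.edgeFinset.filter (fun e => ∀ x ∈ e, x ∈ (∅ : Finset V))) = ∅ := by
      refine Finset.eq_empty_of_forall_notMem ?_
      intro e he
      rw [Finset.mem_filter] at he
      induction e with
      | h a b => exact absurd (he.2 a (Sym2.mem_mk_left a b)) (Finset.notMem_empty a)
    rw [this] at hlt
    simp at hlt
  | succ n ih =>
    intro S hS hlt
    by_cases hall : ∀ v ∈ S, d + 1 ≤ (S.filter (G.Adj v)).card
    · refine ⟨S, Finset.Subset.refl S, ?_, hall⟩
      rw [Finset.nonempty_iff_ne_empty]
      intro hS0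
      subst hS0
      have : (G.edgeFinset.filter (fun e => ∀ x ∈ e, x ∈ (∅ : Finset V))) = ∅ := by
        refine Finset.eq_empty_of_forall_notMem ?_
        intro e he
        rw [Finset.mem_filter] at he
        induction e with
        | h a b => exact absurd (he.2 a (Sym2.mem_mk_left a b)) (Finset.notMem_empty a)
      rw [this] at hlt
      simp at hlt
    · push_neg at hall
      obtain ⟨v, hvS, hvdeg⟩ := hall
      have hvdeg' : (S.filter (G.Adj v)).card ≤ d := by omega
      -- split edges in S into those avoiding v and those containing v
      set F := G.edgeFinset.filter (fun e => ∀ x ∈ e, x ∈ S) with hF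
      have hsplit : (F.filter (fun e => v ∈ e)).card
          + (F.filter (fun e => ¬ v ∈ e)).card = F.card :=
        Finset.card_filter_add_card_filter_not (fun e => v ∈ e)
      have hA : F.filter (fun e => ¬ v ∈ e)
          ⊆ G.edgeFinset.filter (fun e => ∀ x ∈ e, x ∈ S.erase v) := by
        intro e he
        rw [hF, Finset.mem_filter, Finset.mem_filter] at he
        obtain ⟨⟨he1, he2⟩, he3⟩ := he
        rw [Finset.mem_filter]
        refine ⟨he1, fun x hx => Finset.mem_erase.mpr ⟨?_, he2 x hx⟩⟩
        intro hxv
        subst hxv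
        exact he3 hx
      have hB : (F.filter (fun e => v ∈ e)).card ≤ (S.filter (G.Adj v)).card := by
        refine Finset.card_le_card_of_injOn
          (fun e => if h : v ∈ e then Sym2.Mem.other' h else v) ?_ ?_
        · intro e he
          rw [Finset.mem_coe, Finset.mem_filter, hF, Finset.mem_filter] at he
          obtain ⟨⟨he1, he2⟩, hev⟩ := he
          dsimp only
          rw [dif_pos hev]
          rw [Finset.mem_coe, Finset.mem_filter]
          refine ⟨he2 _ (Sym2.other_mem' hev), ?_⟩
          have hspec := Sym2.other_spec' hev
          rw [SimpleGraph.mem_edgeFinset] at he1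
          rw [← hspec] at he1
          exact he1
        · intro e1 h1 e2 h2 heq
          rw [Finset.mem_coe, Finset.mem_filter] at h1 h2
          have h1v := h1.2
          have h2v := h2.2
          dsimp only at heq
          rw [dif_pos h1v, dif_pos h2v] at heq
          rw [← Sym2.other_spec' h1v, ← Sym2.other_spec' h2v, heq]
      have hkey : F.card ≤ (G.edgeFinset.filter (fun e => ∀ x ∈ e, x ∈ S.erase v)).card + d :=
        by
        have := Finset.card_le_card hA
        omega
      have hcard_erase : (S.erase v).card = S.card - 1 := Finset.card_erase_of_mem hvS
      have hScard : 1 ≤ S.card := Finset.card_pos.mpr ⟨v, hvS⟩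
      have hlt' : d * (S.erase v).card
          < (G.edgeFinset.filter (fun e => ∀ x ∈ e, x ∈ S.erase v)).card := by
        have h1 : d * S.card < (G.edgeFinset.filter (fun e => ∀ x ∈ e, x ∈ S.erase v)).card + d := by
          omega
        rw [hcard_erase]
        have : d * (S.card - 1) + d = d * S.card := by
          obtain ⟨m, hm⟩ : ∃ m, S.card = m + 1 := ⟨S.card - 1, by omega⟩
          rw [hm, Nat.add_sub_cancel, Nat.mul_succ]
        omega
      obtain ⟨T, hT1, hT2, hT3⟩ := ih (S.erase v) (by omega) hlt'
      exact ⟨T, hT1.trans (Finset.erase_subset v S), hT2, hT3⟩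

lemma moore_edge_bound {V : Type} [Fintype V] [DecidableEq V]
    (G : SimpleGraph V) [DecidableRel G.Adj] (k : ℕ) (hk : 1 ≤ k)
    (hcyc : ∀ (a : V) (c : G.Walk a a), c.IsCycle → c.length ≤ 2 * k → False) :
    (G.edgeFinset.card : ℝ) ≤ 2 * (Fintype.card V : ℝ) ^ (1 + 1 / (k : ℝ)) := by
  classical
  set n := Fintype.card V with hn
  set d : ℕ := ⌊(n : ℝ) ^ (1 / (k : ℝ))⌋₊ + 1 with hd
  have hkR : (0 : ℝ) < k := by positivity -- k ≥ 1
  -- the key natural-number bound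
  have hnat : G.edgeFinset.card ≤ d * n := by
    by_contra hcon
    push_neg at hcon
    have hfull : (G.edgeFinset.filter (fun e => ∀ x ∈ e, x ∈ (Finset.univ : Finset V)))
        = G.edgeFinset := by
      apply Finset.filter_true_of_mem
      intro e _
      intro x _
      exact Finset.mem_univ x
    have hlt : d * (Finset.univ : Finset V).card
        < (G.edgeFinset.filter (fun e => ∀ x ∈ e, x ∈ (Finset.univ : Finset V))).card := by
      rw [hfull, Finset.card_univ, ← hn]
      exact hcon
    obtain ⟨T, _, hTne, hTdeg⟩ := exists_min_degree_subgraph G d Finset.univ hlt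
    -- pass to the subtype
    set G' : SimpleGraph {x // x ∈ T} := G.comap Subtype.val with hG'
    haveI : DecidableRel G'.Adj := fun a b => by
      rw [hG']
      exact inferInstanceAs (Decidable (G.Adj a.1 b.1))
    have hdeg' : ∀ a : {x // x ∈ T}, d + 1 ≤ (Finset.univ.filter (G'.Adj a)).card := by
      intro a
      refine le_trans (hTdeg a.1 a.2) ?_
      refine Finset.card_le_card_of_injOn (fun x => if h : x ∈ T then (⟨x, h⟩ : {x // x ∈ T}) else a) ?_ ?_
      · intro x hx
        rw [Finset.mem_coe, Finset.mem_filter] at hx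
        dsimp only
        rw [dif_pos hx.1]
        rw [Finset.mem_coe, Finset.mem_filter]
        exact ⟨Finset.mem_univ _, hx.2⟩
      · intro x hx y hy heq
        rw [Finset.mem_coe, Finset.mem_filter] at hx hy
        dsimp only at heq
        rw [dif_pos hx.1, dif_pos hy.1] at heq
        exact congrArg Subtype.val heq
    have hcyc' : ∀ (a : {x // x ∈ T}) (c : G'.Walk a a), c.IsCycle → c.length ≤ 2 * k → False := by
      intro a c hc hlen
      let f : G' →g G := ⟨Subtype.val, fun {x y} h => h⟩
      have hinj : Function.Injective (f : {x // x ∈ T} → V) :=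
        fun x y h => Subtype.val_injective h
      exact hcyc a.1 (c.map f) (hc.map hinj) (by rw [Walk.length_map]; exact hlen)
    haveI : Nonempty {x // x ∈ T} := ⟨⟨hTne.choose, hTne.choose_spec⟩⟩
    have hbound := moore_vertex_bound G' k d hk hcyc' inferInstance hdeg'
    rw [Fintype.card_coe] at hbound
    have hTn : T.card ≤ n := by
      rw [hn]
      exact le_trans (Finset.card_le_univ T) (le_of_eq (Finset.card_univ))
    have hdk : n < d ^ k := by
      have h1 : (n : ℝ) ^ (1 / (k : ℝ)) < d := by
        rw [hd]
        push_cast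
        exact Nat.lt_floor_add_one _
      have h2 : ((n : ℝ) ^ (1 / (k : ℝ))) ^ (k : ℕ) < (d : ℝ) ^ (k : ℕ) := by
        apply pow_lt_pow_left₀ h1 (by positivity)
        omega
      rw [← Real.rpow_natCast ((n : ℝ) ^ (1 / (k : ℝ))) k, ← Real.rpow_mul (by positivity)] at h2
      rw [one_div, inv_mul_cancel₀ (ne_of_gt hkR), Real.rpow_one] at h2
      exact_mod_cast h2
    exact absurd (lt_of_lt_of_le hdk (hbound.trans hTn)) (lt_irrefl n)
  -- now convert to reals
  have hd_le : (d : ℝ) ≤ (n : ℝ) ^ (1 / (k : ℝ)) + 1 := by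
    rw [hd]
    push_cast
    have := Nat.floor_le (show (0:ℝ) ≤ (n : ℝ) ^ (1 / (k : ℝ)) by positivity)
    linarith
  by_cases hn0 : n = 0
  · have h0 : G.edgeFinset.card = 0 := by
      rw [hn0, Nat.mul_zero] at hnat
      omega
    rw [h0, hn0]
    push_cast
    rw [Real.zero_rpow (by positivity)]
    norm_num
  · have hn1 : (1 : ℝ) ≤ (n : ℝ) := by
      have : 1 ≤ n := by omega
      exact_mod_cast this
    have hone : (1 : ℝ) ≤ (n : ℝ) ^ (1 / (k : ℝ)) := by
      apply Real.one_le_rpow hn1 (by positivity)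
    calc (G.edgeFinset.card : ℝ) ≤ (d : ℝ) * n := by exact_mod_cast hnat
      _ ≤ ((n : ℝ) ^ (1 / (k : ℝ)) + 1) * n := by
          apply mul_le_mul_of_nonneg_right hd_le (by positivity)
      _ ≤ (2 * (n : ℝ) ^ (1 / (k : ℝ))) * n := by
          apply mul_le_mul_of_nonneg_right (by linarith) (by positivity)
      _ = 2 * (n : ℝ) ^ (1 + 1 / (k : ℝ)) := by
          rw [Real.rpow_add (by linarith : (0:ℝ) < (n:ℝ)), Real.rpow_one]
          ring

lemma walk_support_color {V 𝒞 : Type} {G : SimpleGraph V} (cV : V → 𝒞)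
    (hmono : ∀ u v, G.Adj u v → cV u = cV v) {a b : V} (w : G.Walk a b) :
    ∀ x ∈ w.support, cV x = cV a := by
  induction w with
  | nil => simp
  | @cons u v b h p ih =>
    intro x hx
    rw [Walk.support_cons, List.mem_cons] at hx
    rcases hx with hx | hx
    · rw [hx]
    · rw [ih x hx]
      exact (hmono u v h).symm

/-- in a graph with colored vertices and edges admitting a `2k`-blocking
set in which every edge appears in at most `f` pairs, the number of monochromatic
edges (endpoints of equal color) is `O(f·n^{1+1/k})`. -/
theorem stmt_14 :
    ∃ C : ℝ, 0 < C ∧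
      ∀ (k f : ℕ), 1 ≤ k → 1 ≤ f →
        ∀ (V : Type) [Fintype V] [DecidableEq V] (𝒞 : Type) (H : SimpleGraph V)
          (cE : Sym2 V → 𝒞) (cV : V → 𝒞) (B : Finset (Sym2 V × 𝒞)),
          -- `B` consists of pairs `(e, χ)` with `e ∈ E(H)` and
          -- `χ ∉ {c(e), c(u), c(v)}` where `e = {u,v}`
          (∀ p ∈ B, p.1 ∈ H.edgeSet ∧ p.2 ≠ cE p.1 ∧ ∀ x ∈ p.1, cV x ≠ p.2) →
          -- every cycle with at most `2k` edges is blocked by some pair of `B`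
          (∀ (a : V) (W : H.Walk a a), W.IsCycle → W.length ≤ 2 * k →
            ∃ p ∈ B, p.1 ∈ W.edges ∧
              ((∃ e' ∈ W.edges, cE e' = p.2) ∨ ∃ x ∈ W.support, cV x = p.2)) →
          -- every edge of `H` appears in at most `f` pairs of `B`
          (∀ e : Sym2 V, (B.filter (fun p => p.1 = e)).card ≤ f) →
          (({e ∈ H.edgeSet | ∀ u v : V, e = s(u, v) → cV u = cV v}).ncard : ℝ) ≤
            C * f * (Fintype.card V : ℝ) ^ (1 + 1 / (k : ℝ)) := by
  refine ⟨16, by norm_num, ?_⟩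
  intro k f hk hf V _ _ 𝒞 H cE cV B hB hblock hmult
  classical
  set M : Finset (Sym2 V) :=
    Finset.univ.filter (fun e => e ∈ H.edgeSet ∧ ∀ u v : V, e = s(u, v) → cV u = cV v) with hM
  have hset : ({e ∈ H.edgeSet | ∀ u v : V, e = s(u, v) → cV u = cV v}).ncard = M.card := by
    rw [← Set.ncard_coe_finset M]
    congr 1
    ext e
    simp [hM, Set.mem_setOf_eq]
  rw [hset]
  set F : Sym2 V → Finset 𝒞 := fun e => (B.filter (fun p => p.1 = e)).image Prod.snd with hF
  have hFcard : ∀ e, (F e).card ≤ f := fun e => le_trans Finset.card_image_le (hmult e)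
  set R : Finset 𝒞 := B.image Prod.snd ∪ M.image cE with hR
  set ext : (↥R → Fin (f + 1)) → 𝒞 → Fin (f + 1) :=
    fun σ c => if h : c ∈ R then σ ⟨c, h⟩ else 0 with hext
  set Q : (↥R → Fin (f + 1)) → Sym2 V → Prop :=
    fun σ e => ext σ (cE e) = 0 ∧ ∀ χ ∈ F e, ext σ χ ≠ 0 with hQ
  have hQdec : ∀ σ, DecidablePred (Q σ) := fun σ e => Classical.propDecidable _
  set ratio : ℝ := (f : ℝ) ^ f / (f + 1 : ℝ) ^ (f + 1) with hratio
  have hratio_pos : 0 < ratio := by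
    rw [hratio]
    have hf' : (0:ℝ) < (f:ℝ) := by exact_mod_cast hf
    positivity
  have hcount : ∀ e ∈ M, ((f + 1 : ℝ)) ^ R.card * ratio ≤
      ((Finset.univ.filter (fun σ : ↥R → Fin (f + 1) => Q σ e)).card : ℝ) := by
    intro e heM
    have hcE_mem : cE e ∈ R := by
      rw [hR]
      exact Finset.mem_union_right _ (Finset.mem_image_of_mem cE heM)
    have hFsub : ∀ χ ∈ F e, χ ∈ R := by
      intro χ hχ
      rw [hR]
      apply Finset.mem_union_left
      rw [hF] at hχ
      exact Finset.image_subset_image (Finset.filter_subset _ _) hχ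
    have hFne : cE e ∉ F e := by
      rw [hF]
      intro hmem
      obtain ⟨p, hp, hp2⟩ := Finset.mem_image.mp hmem
      rw [Finset.mem_filter] at hp
      have := (hB p hp.1).2.1
      rw [hp.2] at this
      exact this hp2
    set t : ↥R → Finset (Fin (f + 1)) := fun x =>
      if (x : 𝒞) = cE e then {0} else
        if (x : 𝒞) ∈ F e then Finset.univ.erase 0 else Finset.univ with ht
    have hsubset : Fintype.piFinset t ⊆ Finset.univ.filter (fun σ => Q σ e) := by
      intro σ hσ
      rw [Fintype.mem_piFinset] at hσ
      rw [Finset.mem_filter]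
      refine ⟨Finset.mem_univ _, ?_, ?_⟩
      · rw [hext]
        dsimp only
        rw [dif_pos hcE_mem]
        have h1 := hσ ⟨cE e, hcE_mem⟩
        rw [ht] at h1
        dsimp only at h1
        rw [if_pos rfl] at h1
        simpa using h1
      · intro χ hχ
        have hχR := hFsub χ hχ
        rw [hext]
        dsimp only
        rw [dif_pos hχR]
        have h1 := hσ ⟨χ, hχR⟩
        rw [ht] at h1
        dsimp only at h1
        have hne0 : ¬ (((⟨χ, hχR⟩ : ↥R) : 𝒞) = cE e) := fun h0 => hFne (h0 ▸ hχ)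
        rw [if_neg hne0, if_pos (show ((⟨χ, hχR⟩ : ↥R) : 𝒞) ∈ F e from hχ)] at h1
        exact Finset.ne_of_mem_erase h1
    -- compute cardinalities
    have hcardt : ∀ x : ↥R, ((t x).card : ℝ) =
        (if (x : 𝒞) = cE e then 1 else if (x : 𝒞) ∈ F e then (f : ℝ) else (f : ℝ) + 1) := by
      intro x
      rw [ht]
      dsimp only
      by_cases h1 : (x : 𝒞) = cE e
      · rw [if_pos h1, if_pos h1]
        simp
      · rw [if_neg h1, if_neg h1]
        by_cases h2 : (x : 𝒞) ∈ F e
        · rw [if_pos h2, if_pos h2]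
          rw [Finset.card_erase_of_mem (Finset.mem_univ _)]
          simp
        · rw [if_neg h2, if_neg h2]
          simp
    set g : 𝒞 → ℝ := fun c => if c = cE e then 1 else if c ∈ F e then (f : ℝ) else (f : ℝ) + 1
      with hg
    have hprod : ((Fintype.piFinset t).card : ℝ) = ∏ c ∈ R, g c := by
      rw [Fintype.card_piFinset]
      push_cast
      rw [← Finset.prod_coe_sort R g]
      exact Finset.prod_congr rfl (fun x _ => hcardt x)
    -- split the product
    have hsplit1 : R.filter (fun c => c = cE e) = {cE e} := by
      ext c
      simp only [Finset.mem_filter, Finset.mem_singleton]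
      constructor
      · exact fun h => h.2
      · intro h
        subst h
        exact ⟨hcE_mem, rfl⟩
    set a : ℕ := ((R.filter (fun c => ¬ c = cE e)).filter (fun c => c ∈ F e)).card with ha
    set b : ℕ := ((R.filter (fun c => ¬ c = cE e)).filter (fun c => ¬ c ∈ F e)).card with hb
    have hab : a + b + 1 = R.card := by
      have h1 := Finset.card_filter_add_card_filter_not
        (s := R.filter (fun c => ¬ c = cE e)) (p := fun c => c ∈ F e)
      have h2 := Finset.card_filter_add_card_filter_not
        (s := R) (p := fun c => c = cE e)
      rw [hsplit1, Finset.card_singleton] at h2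
      omega
    have haf : a ≤ f := by
      refine le_trans (Finset.card_le_card ?_) (hFcard e)
      intro c hc
      rw [Finset.mem_filter] at hc
      exact hc.2
    have hgprod : ∏ c ∈ R, g c = (f : ℝ) ^ a * ((f : ℝ) + 1) ^ b := by
      rw [← Finset.prod_filter_mul_prod_filter_not R (fun c => c = cE e) g]
      rw [hsplit1, Finset.prod_singleton]
      have hg1 : g (cE e) = 1 := by rw [hg]; simp
      rw [hg1, one_mul]
      rw [← Finset.prod_filter_mul_prod_filter_not (R.filter (fun c => ¬ c = cE e))
        (fun c => c ∈ F e) g]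
      congr 1
      · have hgf : ∀ c ∈ (R.filter (fun c => ¬ c = cE e)).filter (fun c => c ∈ F e),
            g c = (f : ℝ) := by
          intro c hc
          rw [Finset.mem_filter, Finset.mem_filter] at hc
          rw [hg]
          dsimp only
          rw [if_neg hc.1.2, if_pos hc.2]
        rw [Finset.prod_congr rfl hgf, Finset.prod_const, ha]
      · have hgf : ∀ c ∈ (R.filter (fun c => ¬ c = cE e)).filter (fun c => ¬ c ∈ F e),
            g c = (f : ℝ) + 1 := by
          intro c hc
          rw [Finset.mem_filter, Finset.mem_filter] at hc
          rw [hg]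
          dsimp only
          rw [if_neg hc.1.2, if_neg hc.2]
        rw [Finset.prod_congr rfl hgf, Finset.prod_const, hb]
    -- the numeric inequality
    have hfR : (1:ℝ) ≤ (f:ℝ) := by exact_mod_cast hf
    have hnum : ((f : ℝ) + 1) ^ R.card * ratio ≤ (f : ℝ) ^ a * ((f : ℝ) + 1) ^ b := by
      rw [← hab, hratio]
      have hpow1 : (0:ℝ) < ((f:ℝ) + 1) ^ (f + 1) := by positivity
      rw [← mul_div_assoc, div_le_iff₀ hpow1]
      have hnat : f ^ f * (f + 1) ^ (a + b + 1) ≤ f ^ a * (f + 1) ^ (b + f + 1) := by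
        calc f ^ f * (f + 1) ^ (a + b + 1)
            = f ^ a * f ^ (f - a) * (f + 1) ^ (a + b + 1) := by
              rw [← pow_add, Nat.add_sub_cancel' haf]
          _ ≤ f ^ a * (f + 1) ^ (f - a) * (f + 1) ^ (a + b + 1) := by
              apply Nat.mul_le_mul_right
              apply Nat.mul_le_mul_left
              exact Nat.pow_le_pow_left (Nat.le_succ f) _
          _ = f ^ a * (f + 1) ^ (b + f + 1) := by
              rw [mul_assoc, ← pow_add]
              congr 2
              omega
      have hcast : (f:ℝ) ^ f * ((f:ℝ) + 1) ^ (a + b + 1) ≤ (f:ℝ) ^ a * ((f:ℝ) + 1) ^ (b + f + 1) := by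
        exact_mod_cast hnat
      calc ((f:ℝ) + 1) ^ (a + b + 1) * (f:ℝ) ^ f
          = (f:ℝ) ^ f * ((f:ℝ) + 1) ^ (a + b + 1) := mul_comm _ _
        _ ≤ (f:ℝ) ^ a * ((f:ℝ) + 1) ^ (b + f + 1) := hcast
        _ = (f:ℝ) ^ a * ((f:ℝ) + 1) ^ b * ((f:ℝ) + 1) ^ (f + 1) := by
            rw [show b + f + 1 = b + (f + 1) by omega, pow_add, mul_assoc]
    calc ((f + 1 : ℝ)) ^ R.card * ratio ≤ (f : ℝ) ^ a * ((f : ℝ) + 1) ^ b := hnum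
      _ = ((Fintype.piFinset t).card : ℝ) := by rw [hprod, hgprod]
      _ ≤ _ := by
          exact_mod_cast Nat.cast_le.mpr (Finset.card_le_card hsubset)
  have havg : ∃ σ0 : ↥R → Fin (f + 1),
      (M.card : ℝ) * ratio ≤ ((M.filter (Q σ0)).card : ℝ) := by
    by_contra hcon
    push_neg at hcon
    haveI : Nonempty (↥R → Fin (f + 1)) := ⟨fun _ => 0⟩
    set S : ℝ := ∑ σ : ↥R → Fin (f + 1), ((M.filter (Q σ)).card : ℝ) with hS
    have hswap : S = ∑ e ∈ M,
        ((Finset.univ.filter (fun σ : ↥R → Fin (f + 1) => Q σ e)).card : ℝ) := by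
      rw [hS]
      calc ∑ σ : ↥R → Fin (f + 1), ((M.filter (Q σ)).card : ℝ)
          = ∑ σ : ↥R → Fin (f + 1), ∑ e ∈ M, (if Q σ e then (1:ℝ) else 0) := by
            refine Finset.sum_congr rfl (fun σ _ => ?_)
            rw [Finset.card_filter]
            push_cast
            exact Finset.sum_congr rfl (fun e _ => by split <;> simp)
        _ = ∑ e ∈ M, ∑ σ : ↥R → Fin (f + 1), (if Q σ e then (1:ℝ) else 0) :=
            Finset.sum_comm
        _ = ∑ e ∈ M,
            ((Finset.univ.filter (fun σ : ↥R → Fin (f + 1) => Q σ e)).card : ℝ) := by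
            refine Finset.sum_congr rfl (fun e _ => ?_)
            rw [Finset.card_filter]
            push_cast
            exact Finset.sum_congr rfl (fun σ _ => by split <;> simp)
    have hlow : (M.card : ℝ) * (((f : ℝ) + 1) ^ R.card * ratio) ≤ S := by
      rw [hswap]
      calc (M.card : ℝ) * (((f : ℝ) + 1) ^ R.card * ratio)
          = ∑ _e ∈ M, (((f : ℝ) + 1) ^ R.card * ratio) := by
            rw [Finset.sum_const, nsmul_eq_mul]
        _ ≤ _ := Finset.sum_le_sum hcount
    have hup : S < (((f : ℝ) + 1) ^ R.card) * ((M.card : ℝ) * ratio) := by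
      rw [hS]
      calc ∑ σ : ↥R → Fin (f + 1), ((M.filter (Q σ)).card : ℝ)
          < ∑ _σ : ↥R → Fin (f + 1), ((M.card : ℝ) * ratio) :=
            Finset.sum_lt_sum_of_nonempty Finset.univ_nonempty (fun σ _ => hcon σ)
        _ = (Fintype.card (↥R → Fin (f + 1)) : ℝ) * ((M.card : ℝ) * ratio) := by
            rw [Finset.sum_const, nsmul_eq_mul, Finset.card_univ]
        _ = (((f : ℝ) + 1) ^ R.card) * ((M.card : ℝ) * ratio) := by
            rw [Fintype.card_fun, Fintype.card_coe, Fintype.card_fin]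
            push_cast
            ring
    have heq : (M.card : ℝ) * (((f : ℝ) + 1) ^ R.card * ratio)
        = (((f : ℝ) + 1) ^ R.card) * ((M.card : ℝ) * ratio) := by ring
    linarith
  obtain ⟨σ0, hσ0⟩ := havg
  set Gs : SimpleGraph V := SimpleGraph.fromEdgeSet ↑(M.filter (Q σ0)) with hGs
  haveI : DecidableRel Gs.Adj := Classical.decRel _
  have hES : Gs.edgeSet = ↑(M.filter (Q σ0)) := by
    rw [hGs, SimpleGraph.edgeSet_fromEdgeSet, sdiff_eq_left]
    rw [Set.disjoint_left]
    intro e he hdiag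
    rw [Finset.mem_coe, Finset.mem_filter, hM, Finset.mem_filter] at he
    exact H.not_isDiag_of_mem_edgeSet he.1.2.1 hdiag
  have hnocyc : ∀ (a : V) (c : Gs.Walk a a), c.IsCycle → c.length ≤ 2 * k → False := by
    intro a c hc hlen
    have hsub : ∀ e ∈ c.edges, e ∈ M.filter (Q σ0) := by
      intro e he
      have h1 := c.edges_subset_edgeSet he
      rwa [hES, Finset.mem_coe] at h1
    have hH : ∀ e ∈ c.edges, e ∈ H.edgeSet := by
      intro e he
      have h1 := hsub e he
      rw [Finset.mem_filter, hM, Finset.mem_filter] at h1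
      exact h1.1.2.1
    have hc' : (c.transfer H hH).IsCycle := hc.transfer hH
    have hlen' : (c.transfer H hH).length ≤ 2 * k := by
      rw [Walk.length_transfer]; exact hlen
    obtain ⟨p, hpB, hpe, hcol⟩ := hblock a (c.transfer H hH) hc' hlen'
    rw [Walk.edges_transfer] at hpe
    have hQp : Q σ0 p.1 := (Finset.mem_filter.mp (hsub p.1 hpe)).2
    have hmonoAdj : ∀ u v : V, Gs.Adj u v → cV u = cV v := by
      intro u v huv
      rw [hGs, SimpleGraph.fromEdgeSet_adj, Finset.mem_coe, Finset.mem_filter,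
        hM, Finset.mem_filter] at huv
      exact huv.1.1.2.2 u v rfl
    have hsupcol := walk_support_color cV hmonoAdj c
    have hmemF : p.2 ∈ F p.1 := by
      rw [hF]
      exact Finset.mem_image.mpr ⟨p, Finset.mem_filter.mpr ⟨hpB, rfl⟩, rfl⟩
    rcases hcol with ⟨e', he', hce'⟩ | ⟨x, hx, hcx⟩
    · rw [Walk.edges_transfer] at he'
      have hQe' : Q σ0 e' := (Finset.mem_filter.mp (hsub e' he')).2
      have hne0 := hQp.2 p.2 hmemF
      rw [← hce'] at hne0
      exact hne0 hQe'.1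
    · rw [Walk.support_transfer] at hx
      have hxa : cV x = cV a := hsupcol x hx
      have hy : p.1.out.1 ∈ p.1 := Sym2.out_fst_mem p.1
      have hrep := Sym2.other_spec hy
      have hysup : p.1.out.1 ∈ c.support := by
        apply c.fst_mem_support_of_mem_edges (u := Sym2.Mem.other hy)
        rw [hrep]
        exact hpe
      have hya : cV p.1.out.1 = cV a := hsupcol _ hysup
      have hne := (hB p hpB).2.2 p.1.out.1 hy
      apply hne
      rw [hya, ← hxa, hcx]
  have hedge : ((M.filter (Q σ0)).card : ℝ) = (Gs.edgeSet.ncard : ℝ) := by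
    rw [hES, Set.ncard_coe_finset]
  have hmoore' : ((Gs.edgeSet.ncard : ℕ) : ℝ) ≤ 2 * (Fintype.card V : ℝ) ^ (1 + 1 / (k : ℝ)) := by
    have hmoore := moore_edge_bound Gs k hk hnocyc
    rwa [← Set.ncard_coe_finset, SimpleGraph.coe_edgeFinset] at hmoore
  have hratio_bound : 1 / ratio ≤ 8 * (f : ℝ) := by
    have hfR : (1:ℝ) ≤ (f:ℝ) := by exact_mod_cast hf
    have hfpos : (0:ℝ) < (f:ℝ) := by linarith
    have hpowpos : (0:ℝ) < (f:ℝ) ^ f := by positivity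
    have hexp : ((f:ℝ) + 1) ^ f ≤ Real.exp 1 * (f:ℝ) ^ f := by
      have heq : ((f:ℝ) + 1) = (1 + 1 / f) * f := by field_simp
      rw [heq, mul_pow]
      have h2 : (1 + 1 / (f:ℝ)) ^ f ≤ Real.exp (1 / f) ^ f := by
        apply pow_le_pow_left₀ (by positivity)
        have := Real.add_one_le_exp (1 / (f:ℝ))
        linarith
      have h3 : Real.exp (1 / (f:ℝ)) ^ f = Real.exp 1 := by
        rw [← Real.exp_nat_mul]
        congr 1
        field_simp
      rw [h3] at h2
      have := mul_le_mul_of_nonneg_right h2 (le_of_lt hpowpos)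
      exact this
    have hexp3 : Real.exp 1 ≤ 3 := by
      have := Real.exp_one_lt_d9
      linarith
    rw [hratio, one_div_div, div_le_iff₀ hpowpos]
    have hstep : ((f:ℝ) + 1) ^ (f + 1) = ((f:ℝ) + 1) ^ f * ((f:ℝ) + 1) := by ring
    rw [hstep]
    calc ((f:ℝ) + 1) ^ f * ((f:ℝ) + 1) ≤ (Real.exp 1 * (f:ℝ) ^ f) * (2 * f) := by
          apply mul_le_mul hexp (by linarith) (by linarith) (by positivity)
      _ ≤ (3 * (f:ℝ) ^ f) * (2 * f) := by
          apply mul_le_mul_of_nonneg_right _ (by positivity)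
          apply mul_le_mul_of_nonneg_right hexp3 (le_of_lt hpowpos)
      _ ≤ 8 * (f:ℝ) * (f:ℝ) ^ f := by nlinarith

  have h2 : (M.card : ℝ) * ratio ≤ 2 * (Fintype.card V : ℝ) ^ (1 + 1 / (k : ℝ)) :=
    hσ0.trans (le_of_le_of_eq (le_of_eq hedge) rfl |>.trans hmoore')
  calc (M.card : ℝ) = ((M.card : ℝ) * ratio) * (1 / ratio) := by
        field_simp
    _ ≤ (2 * (Fintype.card V : ℝ) ^ (1 + 1 / (k : ℝ))) * (8 * f) := by
        apply mul_le_mul h2 hratio_bound (by positivity) (by positivity)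
    _ = 16 * f * (Fintype.card V : ℝ) ^ (1 + 1 / (k : ℝ)) := by ring
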